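/- For every bundle scenario f: Γ → Σ, the map ζ_f sending an empirical model p on f to the simplicial distribution Np on Nf is a bijection from the set bEmp(f) of empirical models on f onto the set sDist(Nf) of simplicial distributions on Nf: NΓ → NΣ. -/

import Mathlib

universe u v w t

namespace Ctx

/-- An abstract simplicial complex on the vertex type `V`: a collection of
nonempty finite subsets of `V` (the simplices/faces), closed under passing to
nonempty subsets, and containing every singleton (so that `V` is exactly the
vertex set). -/
structure SComplex (V : Type u) where
  faces : Set (Set V)
  finite_mem : ∀ σ ∈ faces, Set.Finite σ
  nonempty_mem : ∀ σ ∈ faces, Set.Nonempty σ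
  down_closed : ∀ ⦃σ⦄, σ ∈ faces → ∀ ⦃τ⦄, τ ⊆ σ → τ.Nonempty → τ ∈ faces
  singleton_mem : ∀ x : V, {x} ∈ faces

namespace SComplex

variable {V : Type u} {W : Type v} {V' : Type w} {V'' : Type t}

/-- A map of simplicial complexes: a function on vertices carrying every
simplex (elementwise image) to a simplex. -/
@[ext]
structure Map (Γ : SComplex V) (K : SComplex W) where
  toFun : V → W
  map_faces : ∀ ⦃σ⦄, σ ∈ Γ.faces → toFun '' σ ∈ K.faces

variable {Γ : SComplex V} {K : SComplex W} {K' : SComplex V'}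

/-- The identity simplicial complex map. -/
protected def Map.id (K : SComplex V) : Map K K :=
  ⟨fun x => x, fun σ h => by simpa using h⟩

/-- Composition of simplicial complex maps. -/
def Map.comp {L : SComplex V'} (g : Map K L) (f : Map Γ K) : Map Γ L :=
  ⟨g.toFun ∘ f.toFun, fun σ h => by
    rw [Set.image_comp]; exact g.map_faces (f.map_faces h)⟩

/-- The star of a simplex: all simplices containing it. -/
def star (K : SComplex V) (σ : Set V) : Set (Set V) := {τ | τ ∈ K.faces ∧ σ ⊆ τ}

/-- Surjectivity: every simplex of the target is an image of a simplex. -/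
def Map.Surj (f : Map Γ K) : Prop := ∀ σ ∈ K.faces, ∃ γ ∈ Γ.faces, f.toFun '' γ = σ

/-- Local surjectivity: stars surject onto stars. -/
def Map.LocSurj (f : Map Γ K) : Prop :=
  ∀ γ ∈ Γ.faces, ∀ τ ∈ K.star (f.toFun '' γ), ∃ γ' ∈ Γ.star γ, f.toFun '' γ' = τ

/-- Discreteness over vertices: no edge between distinct vertices with the
same image. -/
def Map.DiscV (f : Map Γ K) : Prop :=
  ∀ x y : V, x ≠ y → f.toFun x = f.toFun y → ({x, y} : Set V) ∉ Γ.faces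

/-- A bundle scenario: a surjective, locally surjective simplicial complex map
that is discrete over vertices. -/
def Map.IsBundle (f : Map Γ K) : Prop := f.Surj ∧ f.LocSurj ∧ f.DiscV

/-- `f` has the right lifting property with respect to `g`. -/
def RLP {A : Type*} {B : Type*} {CA : SComplex A} {CB : SComplex B}
    (g : Map CA CB) (f : Map Γ K) : Prop :=
  ∀ (u : Map CA Γ) (v : Map CB K), f.comp u = v.comp g →
    ∃ h : Map CB Γ, h.comp g = u ∧ f.comp h = v

/-- The full simplicial complex `Δ^n` on `{0, …, n}`. -/
def deltaC (n : ℕ) : SComplex (Fin (n + 1)) where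
  faces := {σ | σ.Nonempty}
  finite_mem := fun σ _ => σ.toFinite
  nonempty_mem := fun _ h => h
  down_closed := fun _ _ _ _ h => h
  singleton_mem := fun x => Set.singleton_nonempty x

/-- The simplicial complex map `Δ^m → Δ^n` induced by a function
`{0,…,m} → {0,…,n}`. -/
def deltaMap {m n : ℕ} (θ : Fin (m + 1) → Fin (n + 1)) : Map (deltaC m) (deltaC n) :=
  ⟨θ, fun _ h => h.image θ⟩

/-- The empty simplicial complex. -/
def emptyC : SComplex Empty where
  faces := ∅
  finite_mem := fun _ h => h.elim
  nonempty_mem := fun _ h => h.elim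
  down_closed := fun _ h => h.elim
  singleton_mem := fun x => x.elim

/-- The inclusion of the empty simplicial complex into `Δ^n`. -/
def emptyToDelta (n : ℕ) : Map emptyC (deltaC n) :=
  ⟨fun x => x.elim, fun _ h => h.elim⟩

/-- The type of faces of a simplicial complex. -/
abbrev Face (K : SComplex V) : Type u := {σ : Set V // σ ∈ K.faces}

/-- The nerve complex `ĤN K`: vertices are the simplices of `K`, and a
nonempty finite set of simplices is a face iff its union is a face of `K`. -/
def nerveC (K : SComplex V) : SComplex K.Face where
  faces := {τ | τ.Finite ∧ τ.Nonempty ∧ (⋃ σ ∈ τ, (σ : Set V)) ∈ K.faces}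
  finite_mem := fun _ h => h.1
  nonempty_mem := fun _ h => h.2.1
  down_closed := by
    intro τ h τ' hsub hne
    refine ⟨h.1.subset hsub, hne, K.down_closed h.2.2 ?_ ?_⟩
    · exact Set.biUnion_subset_biUnion_left hsub
    · obtain ⟨σ, hσ⟩ := hne
      obtain ⟨x, hx⟩ := K.nonempty_mem σ.1 σ.2
      exact ⟨x, Set.mem_biUnion hσ hx⟩
  singleton_mem := fun σ => ⟨Set.finite_singleton σ, Set.singleton_nonempty σ, by
    simpa using σ.2⟩

/-- The map `ĤN f` induced on nerve complexes. -/
def nerveMap (f : Map Γ K) : Map (nerveC Γ) (nerveC K) where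
  toFun γ := ⟨f.toFun '' γ.1, f.map_faces γ.2⟩
  map_faces := by
    intro τ hτ
    refine ⟨hτ.1.image _, hτ.2.1.image _, ?_⟩
    have h : (⋃ σ ∈ (fun γ : Γ.Face => (⟨f.toFun '' γ.1, f.map_faces γ.2⟩ : K.Face)) '' τ,
        (σ : Set W)) = f.toFun '' (⋃ σ ∈ τ, (σ : Set V)) := by
      rw [Set.biUnion_image, Set.image_iUnion₂]
    exact Set.mem_of_eq_of_mem h (f.map_faces hτ.2.2)

/-- The unit `δ : K → ĤN K`, sending a vertex to the singleton simplex. -/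
def deltaHat (K : SComplex V) : Map K (nerveC K) where
  toFun x := ⟨{x}, K.singleton_mem x⟩
  map_faces := by
    intro σ hσ
    refine ⟨(K.finite_mem σ hσ).image _, (K.nonempty_mem σ hσ).image _, ?_⟩
    have h : (⋃ τ ∈ (fun x : V => (⟨{x}, K.singleton_mem x⟩ : K.Face)) '' σ,
        (τ : Set V)) = σ := by
      rw [Set.biUnion_image]
      exact Set.biUnion_of_singleton σ
    exact Set.mem_of_eq_of_mem h hσ

/-- The multiplication `μ : ĤN (ĤN K) → ĤN K` of the nerve complex monad,
sending a set of simplices to its union. -/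
def muMap (K : SComplex V) : Map (nerveC (nerveC K)) (nerveC K) where
  toFun τ := ⟨⋃ σ ∈ τ.1, (σ : Set V), τ.2.2.2⟩
  map_faces := by
    intro T hT
    refine ⟨hT.1.image _, hT.2.1.image _, ?_⟩
    have h : (⋃ σ ∈ (fun τ : (nerveC K).Face =>
          (⟨⋃ σ ∈ τ.1, (σ : Set V), τ.2.2.2⟩ : K.Face)) '' T, (σ : Set V))
        = ⋃ σ ∈ (⋃ τ ∈ T, (τ : Set K.Face)), (σ : Set V) := by
      rw [Set.biUnion_image]
      ext x
      simp only [Set.mem_iUnion, Set.mem_setOf_eq]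
      tauto
    exact Set.mem_of_eq_of_mem h hT.2.2.2.2

/-- The vertex type of the pull-back of `f : Γ → K` along `π : K' → K`. -/
def PB {Γ : SComplex V} {K : SComplex W} {K' : SComplex V'} (f : Map Γ K) (π : Map K' K) :
    Type (max u w) :=
  {q : V × V' // f.toFun q.1 = π.toFun q.2}

/-- The pull-back of `f : Γ → K` along `π : K' → K`: vertices are pairs
`(x, y)` with `f x = π y`, and a set of pairs is a simplex iff both coordinate
projections are simplices. -/
def pullback {Γ : SComplex V} {K : SComplex W} {K' : SComplex V'} (f : Map Γ K) (π : Map K' K) :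
    SComplex (PB f π) where
  faces := {τ | ((fun q : PB f π => q.1.1) '' τ) ∈ Γ.faces ∧
    ((fun q : PB f π => q.1.2) '' τ) ∈ K'.faces}
  finite_mem := by
    intro τ h
    have h1 : (Subtype.val '' τ).Finite := by
      refine Set.Finite.subset (Set.Finite.prod (Γ.finite_mem _ h.1) (K'.finite_mem _ h.2)) ?_
      rintro q ⟨r, hr, rfl⟩
      exact ⟨⟨r, hr, rfl⟩, ⟨r, hr, rfl⟩⟩
    exact Set.Finite.of_finite_image h1 Subtype.val_injective.injOn
  nonempty_mem := fun τ h => Set.Nonempty.of_image (Γ.nonempty_mem _ h.1)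
  down_closed := fun τ h τ' hsub hne =>
    ⟨Γ.down_closed h.1 (Set.image_mono hsub) (hne.image _),
     K'.down_closed h.2 (Set.image_mono hsub) (hne.image _)⟩
  singleton_mem := fun q => by
    constructor
    · simpa using Γ.singleton_mem q.1.1
    · simpa using K'.singleton_mem q.1.2

/-- First projection of the pull-back. -/
def pbFst {Γ : SComplex V} {K : SComplex W} {K' : SComplex V'} (f : Map Γ K) (π : Map K' K) :
    Map (pullback f π) Γ :=
  ⟨fun q => q.1.1, fun _ h => h.1⟩

/-- Second projection of the pull-back (the pulled-back bundle). -/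
def pbSnd {Γ : SComplex V} {K : SComplex W} {K' : SComplex V'} (f : Map Γ K) (π : Map K' K) :
    Map (pullback f π) K' :=
  ⟨fun q => q.1.2, fun _ h => h.2⟩

/-- The event complex `E_O K` of a scenario `(K, O)`: vertices are pairs
`(x, o)` with `o ∈ O x`, and simplices are graphs of outcome assignments over
simplices of `K`. -/
def eventComplex (K : SComplex V) (O : V → Type v) : SComplex ((x : V) × O x) where
  faces := {τ | (Sigma.fst '' τ) ∈ K.faces ∧ Set.InjOn Sigma.fst τ}
  finite_mem := fun _ h => Set.Finite.of_finite_image (K.finite_mem _ h.1) h.2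
  nonempty_mem := fun _ h => Set.Nonempty.of_image (K.nonempty_mem _ h.1)
  down_closed := fun τ h τ' hsub hne =>
    ⟨K.down_closed h.1 (Set.image_mono hsub) (hne.image _), h.2.mono hsub⟩
  singleton_mem := fun p => ⟨by simpa using K.singleton_mem p.1, Set.injOn_singleton _ _⟩

/-- The canonical projection `E_O K → K` of a scenario. -/
def eventProj (K : SComplex V) (O : V → Type v) : Map (eventComplex K O) K :=
  ⟨Sigma.fst, fun _ h => h.1⟩

end SComplex

open SComplex

/-- `R`-distributions on a set `U`: finitely supported `R`-valued functions
summing to `1`. -/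
def Dist (R : Type u) [CommSemiring R] (U : Type v) : Type (max u v) :=
  {p : U →₀ R // p.sum (fun _ r => r) = 1}

/-- Push-forward of distributions along a function. -/
noncomputable def Dist.map {R : Type u} [CommSemiring R] {U : Type v} {U' : Type w} (g : U → U')
    (p : Dist R U) : Dist R U' :=
  ⟨Finsupp.mapDomain g p.1, by
    rw [Finsupp.sum_mapDomain_index (fun _ => rfl) (fun _ _ _ => rfl)]
    exact p.2⟩

/-- The Dirac distribution at a point. -/
noncomputable def Dist.pure {R : Type u} [CommSemiring R] {U : Type v} (u : U) : Dist R U :=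
  ⟨Finsupp.single u 1, by rw [Finsupp.sum_single_index rfl]⟩

namespace SComplex

/-- The fiber of a simplicial complex map over a simplex of the target. -/
abbrev Map.fiber {Γ : SComplex V} {K : SComplex W} (f : Map Γ K) (σ : Set W) : Type u :=
  {γ : Set V // γ ∈ Γ.faces ∧ f.toFun '' γ = σ}

/-- The restriction map between fibers, sending `γ` over `σ` to the
subsimplex of `γ` lying over `σ' ⊆ σ`.  (For bundle scenarios this is the
unique such subsimplex.) -/
def Map.resFiber {Γ : SComplex V} {K : SComplex W} (f : Map Γ K) {σ σ' : Set W}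
    (hσ' : σ' ∈ K.faces) (h : σ' ⊆ σ) (γ : f.fiber σ) : f.fiber σ' := by
  have hne : ({y | y ∈ γ.1 ∧ f.toFun y ∈ σ'} : Set V).Nonempty := by
    obtain ⟨x, hx⟩ := K.nonempty_mem σ' hσ'
    have hx' : x ∈ f.toFun '' γ.1 := (Set.ext_iff.mp γ.2.2 x).mpr (h hx)
    obtain ⟨y, hy, rfl⟩ := hx'
    exact ⟨y, hy, hx⟩
  refine ⟨{y | y ∈ γ.1 ∧ f.toFun y ∈ σ'},
    Γ.down_closed γ.2.1 (fun y hy => hy.1) hne, ?_⟩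
  ext x
  constructor
  · rintro ⟨y, ⟨hy, hfy⟩, rfl⟩
    exact hfy
  · intro hx
    have hx' : x ∈ f.toFun '' γ.1 := (Set.ext_iff.mp γ.2.2 x).mpr (h hx)
    obtain ⟨y, hy, rfl⟩ := hx'
    exact ⟨y, ⟨hy, hx⟩, rfl⟩

/-- An empirical model on a bundle scenario `f : Γ → K`: a compatible family
of distributions on the fibers of `f`. -/
structure EmpiricalModel (R : Type t) [CommSemiring R] {Γ : SComplex V} {K : SComplex W}
    (f : Map Γ K) where
  dist : ∀ σ, σ ∈ K.faces → Dist R (f.fiber σ)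
  compat : ∀ σ (hσ : σ ∈ K.faces) σ' (hσ' : σ' ∈ K.faces) (h : σ' ⊆ σ),
    Dist.map (f.resFiber hσ' h) (dist σ hσ) = dist σ' hσ'

/-- An empirical model on a scenario `(K, O)`: a compatible family of
distributions on joint outcome assignments over each measurement context. -/
structure ScenEmp (R : Type t) [CommSemiring R] (K : SComplex V) (O : V → Type v) where
  dist : ∀ σ, σ ∈ K.faces → Dist R (∀ x : σ, O x.1)
  compat : ∀ σ (hσ : σ ∈ K.faces) σ' (hσ' : σ' ∈ K.faces) (h : σ' ⊆ σ),
    Dist.map (fun (s : ∀ x : σ, O x.1) (x : σ') => s ⟨x.1, h x.2⟩) (dist σ hσ) = dist σ' hσ'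

end SComplex

namespace SComplex

variable {V : Type u} {W : Type v} {V' : Type w}


/-- The defining property of the push-forward `π_* p` of an empirical model
`p` on `f` along a simplicial relation `π : K' → ĤN K` (a simplicial complex
map into the nerve complex): over a simplex `σ'` of `K'`, the value at a fiber
element `γ'` of the pulled-back bundle is the value of `p` over the union
`π̄(σ')` at the union of the first components of `γ'`. -/
def piPushSpec {Γ : SComplex V} {K : SComplex W} {K' : SComplex V'}
    (f : Map Γ K) (π : Map K' (nerveC K)) {R : Type t} [CommSemiring R]
    (p : EmpiricalModel R f) (q : EmpiricalModel R (pbSnd (nerveMap f) π)) : Prop :=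
  ∀ σ' (hσ' : σ' ∈ K'.faces) (γ' : (pbSnd (nerveMap f) π).fiber σ')
    (hu : (⋃ x' ∈ σ', ((π.toFun x' : K.Face) : Set W)) ∈ K.faces)
    (γ : f.fiber (⋃ x' ∈ σ', ((π.toFun x' : K.Face) : Set W))),
    (γ : Set V) = (⋃ r ∈ γ'.1, ((r.1.1 : Γ.Face) : Set V)) →
    (q.dist σ' hσ').1 γ' = (p.dist _ hu).1 γ

/-- The fiber element of the event bundle given by the graph of an outcome
assignment `s` over a simplex `σ`. -/
def graphFiber (K : SComplex V) (O : V → Type v) {σ : Set V} (hσ : σ ∈ K.faces)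
    (s : ∀ x : σ, O x.1) : (eventProj K O).fiber σ := by
  refine ⟨{p : (x : V) × O x | ∃ h : p.1 ∈ σ, p.2 = s ⟨p.1, h⟩}, ⟨?_, ?_⟩, ?_⟩
  · have h : Sigma.fst '' {p : (x : V) × O x | ∃ h : p.1 ∈ σ, p.2 = s ⟨p.1, h⟩} = σ := by
      ext x
      constructor
      · rintro ⟨p, ⟨hp, _⟩, rfl⟩; exact hp
      · intro hx; exact ⟨⟨x, s ⟨x, hx⟩⟩, ⟨hx, rfl⟩, rfl⟩
    exact Set.mem_of_eq_of_mem h hσ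
  · rintro ⟨x₁, o₁⟩ ⟨h₁, ho₁⟩ ⟨x₂, o₂⟩ ⟨h₂, ho₂⟩ hx
    obtain rfl : x₁ = x₂ := hx
    exact congrArg (Sigma.mk x₁) (ho₁.trans ho₂.symm)
  · ext x
    constructor
    · rintro ⟨p, ⟨hp, _⟩, rfl⟩; exact hp
    · intro hx; exact ⟨⟨x, s ⟨x, hx⟩⟩, ⟨hx, rfl⟩, rfl⟩

/-- Push-forward of a fiber element along a map over the base. -/
def pushFiber {Γ : SComplex V} {Γ' : SComplex V'} {K : SComplex W}
    (f : Map Γ K) (g : Map Γ' K) (α : Map Γ Γ') (hc : g.comp α = f) (σ : Set W)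
    (γ : f.fiber σ) : g.fiber σ := by
  refine ⟨α.toFun '' γ.1, α.map_faces γ.2.1, ?_⟩
  rw [← Set.image_comp]
  have h : g.toFun ∘ α.toFun = f.toFun := congrArg Map.toFun hc
  rw [h]
  exact γ.2.2

/-- Sections of a bundle scenario. -/
def BSection {Γ : SComplex V} {K : SComplex W} (f : Map Γ K) : Type _ :=
  {s : Map K Γ // f.comp s = Map.id K}

/-- Evaluation of a section of a bundle scenario at a simplex of the base,
giving an element of the fiber. -/
def BSection.ev {Γ : SComplex V} {K : SComplex W} (f : Map Γ K) (σ : Set W)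
    (hσ : σ ∈ K.faces) (s : BSection f) : f.fiber σ := by
  refine ⟨s.1.toFun '' σ, s.1.map_faces hσ, ?_⟩
  rw [← Set.image_comp]
  have h : f.toFun ∘ s.1.toFun = fun x => x := congrArg Map.toFun s.2
  rw [h, Set.image_id']

/-- Noncontextuality of an empirical model on a bundle scenario: it is a
mixture of deterministic models coming from sections. -/
def BundleNC (R : Type t) [CommSemiring R] {Γ : SComplex V} {K : SComplex W}
    (f : Map Γ K) (p : EmpiricalModel R f) : Prop :=
  ∃ d : Dist R (BSection f), ∀ σ (hσ : σ ∈ K.faces),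
    p.dist σ hσ = Dist.map (BSection.ev f σ hσ) d

/-- Noncontextuality of an empirical model on a scenario `(K, O)`: it is a
mixture of deterministic models coming from global outcome assignments. -/
def ScenNC (R : Type t) [CommSemiring R] (K : SComplex V) (O : V → Type v)
    (e : ScenEmp R K O) : Prop :=
  ∃ d : Dist R (∀ x : V, O x), ∀ σ (hσ : σ ∈ K.faces),
    e.dist σ hσ = Dist.map (fun (g : ∀ x : V, O x) (x : σ) => g x.1) d

end SComplex

end Ctx
namespace Ctx

open CategoryTheory SComplex

/-! ### Simplicial sets: the nerve space of a simplicial complex -/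

/-- The commutative monoid of subsets of `V` under union (with unit `∅`). -/
def UM (V : Type u) : Type u := Set V

namespace UM

/-- View an element of the union monoid as a set. -/
def toSet {V : Type u} (a : UM V) : Set V := a

/-- View a set as an element of the union monoid. -/
def ofSet {V : Type u} (a : Set V) : UM V := a

end UM

instance {V : Type u} : Monoid (UM V) where
  mul a b := UM.ofSet (a.toSet ∪ b.toSet)
  one := UM.ofSet ∅
  mul_assoc a b c := Set.union_assoc _ _ _
  one_mul := Set.empty_union
  mul_one := Set.union_empty

@[simp] lemma UM.toSet_mul {V : Type u} (a b : UM V) :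
    (a * b).toSet = a.toSet ∪ b.toSet := rfl

@[simp] lemma UM.toSet_one {V : Type u} : (1 : UM V).toSet = (∅ : Set V) := rfl

/-- The nerve of the one-object category on the union monoid: the ambient
simplicial set whose `n`-simplices are `n`-tuples of subsets of `V` (recorded
as a composable sequence of arrows). -/
def B (V : Type u) : SSet.{u} := nerve (SingleObj (UM V))

/-- The total subset (the "union of the entries") of a simplex of `B V`:
the value of the corresponding functor on the morphism `0 ⟶ last`. -/
def totM {V : Type u} {Δ : SimplexCategoryᵒᵖ} (x : (B V).obj Δ) : UM V :=
  x.map (homOfLE (Fin.zero_le (Fin.last Δ.unop.len)))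

/-- The total subset of a simplex of `B V`, as a set. -/
def tot {V : Type u} {Δ : SimplexCategoryᵒᵖ} (x : (B V).obj Δ) : Set V :=
  (totM x).toSet

lemma tot_whisker_subset {V : Type u} {m n : ℕ} (g : Fin (m + 1) ⥤ Fin (n + 1))
    (x : ComposableArrows (SingleObj (UM V)) n) :
    UM.toSet ((x.whiskerLeft g).map (homOfLE (Fin.zero_le (Fin.last m))))
      ⊆ UM.toSet (x.map (homOfLE (Fin.zero_le (Fin.last n)))) := by
  intro a ha
  have comp_eq : homOfLE (Fin.zero_le (Fin.last n))
      = homOfLE (Fin.zero_le (g.obj 0)) ≫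
          (g.map (homOfLE (Fin.zero_le (Fin.last m))) ≫
            homOfLE (Fin.le_last (g.obj (Fin.last m)))) :=
    Subsingleton.elim _ _
  have e : x.map (homOfLE (Fin.zero_le (Fin.last n)))
      = x.map (homOfLE (Fin.zero_le (g.obj 0))) ≫
          (x.map (g.map (homOfLE (Fin.zero_le (Fin.last m)))) ≫
            x.map (homOfLE (Fin.le_last (g.obj (Fin.last m))))) := by
    rw [comp_eq, x.map_comp, x.map_comp]
  have ha' : a ∈ UM.toSet (x.map (g.map (homOfLE (Fin.zero_le (Fin.last m))))) := ha
  rw [e, SingleObj.comp_as_mul, SingleObj.comp_as_mul, UM.toSet_mul, UM.toSet_mul]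
  exact Or.inl (Or.inr ha')

lemma tot_map_subset {V : Type u} {Δ Δ' : SimplexCategoryᵒᵖ} (θ : Δ ⟶ Δ')
    (x : (B V).obj Δ) : tot ((B V).map θ x) ⊆ tot x :=
  tot_whisker_subset (SimplexCategory.toCat.map θ.unop).toFunctor x

/-- The nerve space `N K` of a simplicial complex `K`: the simplicial subset
of `B V` consisting of the tuples of subsets whose union is empty or a
simplex of `K`.  (Each entry is then automatically empty or a simplex.) -/
def NC {V : Type u} (K : SComplex V) : SSet.{u} where
  obj Δ := {x : (B V).obj Δ // tot x = ∅ ∨ tot x ∈ K.faces}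
  map θ := ↾fun x => ⟨(B V).map θ x.1, by
    rcases x.2 with h | h
    · left
      have hsub := tot_map_subset θ x.1
      rw [h] at hsub
      exact Set.subset_empty_iff.mp hsub
    · by_cases h0 : tot ((B V).map θ x.1) = ∅
      · exact Or.inl h0
      · exact Or.inr (K.down_closed h (tot_map_subset θ x.1)
          (Set.nonempty_iff_ne_empty.mpr h0))⟩
  map_id Δ := by
    refine ConcreteCategory.hom_ext _ _ fun x => ?_
    exact Subtype.ext (congrArg (fun g => (ConcreteCategory.hom g) x.1) ((B V).map_id Δ))
  map_comp θ θ' := by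
    refine ConcreteCategory.hom_ext _ _ fun x => ?_
    exact Subtype.ext (congrArg (fun g => (ConcreteCategory.hom g) x.1) ((B V).map_comp θ θ'))

/-- The map of ambient simplicial sets induced by a monoid homomorphism of
union monoids. -/
def inducedB {V W : Type u} (h : UM V →* UM W) : B V ⟶ B W where
  app Δ := ↾fun x => x ⋙ (SingleObj.mapHom (UM V) (UM W)) h
  naturality Δ Δ' θ := rfl

lemma totM_inducedB {V W : Type u} (h : UM V →* UM W) {Δ : SimplexCategoryᵒᵖ}
    (x : (B V).obj Δ) : totM ((inducedB h).app Δ x) = h (totM x) := rfl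

/-- The map of nerve spaces induced by a monoid homomorphism of union monoids
carrying faces to faces. -/
def inducedNC {V W : Type u} {Γ : SComplex V} {K : SComplex W} (h : UM V →* UM W)
    (hh : ∀ σ : Set V, σ ∈ Γ.faces → (h (UM.ofSet σ)).toSet ∈ K.faces) :
    NC Γ ⟶ NC K where
  app Δ := ↾fun x => ⟨(inducedB h).app Δ x.1, by
    rcases x.2 with h0 | hfc
    · left
      have h1 : totM x.1 = 1 := h0
      show (totM ((inducedB h).app Δ x.1)).toSet = ∅
      rw [totM_inducedB, h1, map_one]
      rfl
    · right
      exact hh (tot x.1) hfc⟩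
  naturality Δ Δ' θ := by
    refine ConcreteCategory.hom_ext _ _ fun x => ?_
    exact Subtype.ext (congrArg (fun g => (ConcreteCategory.hom g) x.1) ((inducedB h).naturality θ))

/-- The image monoid homomorphism of union monoids induced by a function. -/
def imageHom {V W : Type u} (f : V → W) : UM V →* UM W where
  toFun a := UM.ofSet (f '' a.toSet)
  map_one' := congrArg UM.ofSet (Set.image_empty f)
  map_mul' a b := congrArg UM.ofSet (Set.image_union f a.toSet b.toSet)

/-- The map of nerve spaces `N f : N Γ → N K` induced by a simplicial complex
map `f : Γ → K`, applying `f` termwise (with `f(∅) = ∅`). -/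
def NMap {V W : Type u} {Γ : SComplex V} {K : SComplex W} (f : Map Γ K) :
    NC Γ ⟶ NC K :=
  inducedNC (imageHom f.toFun) (fun _ hσ => f.map_faces hσ)

/-- The union monoid homomorphism induced by a simplicial relation
`π : K' → ĤN K`. -/
def relHom {V' W : Type u} {K' : SComplex V'} {K : SComplex W}
    (π : Map K' (nerveC K)) : UM V' →* UM W where
  toFun a := UM.ofSet (⋃ x ∈ a.toSet, ((π.toFun x : K.Face) : Set W))
  map_one' := congrArg UM.ofSet (by simp [UM.toSet, UM.ofSet])
  map_mul' a b := congrArg UM.ofSet (Set.biUnion_union a.toSet b.toSet _)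

/-- The map of nerve spaces `T(π) : N K' → N K` induced by a simplicial
relation `π : K' → ĤN K`, applying `σ ↦ π̄(σ)` termwise. -/
def Tmap {V' W : Type u} {K' : SComplex V'} {K : SComplex W}
    (π : Map K' (nerveC K)) : NC K' ⟶ NC K :=
  inducedNC (relHom π) (fun σ hσ => by
    have h2 := (π.map_faces hσ).2.2
    rwa [Set.biUnion_image] at h2)

/-! ### Distributions on simplicial sets -/

/-- The distribution functor on the category of types. -/
noncomputable def DistF (R : Type u) [CommSemiring R] : Type u ⥤ Type u where
  obj U := Dist R U
  map g := ↾fun p => Dist.map g p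
  map_id U := by
    refine ConcreteCategory.hom_ext _ _ fun p => ?_
    exact Subtype.ext Finsupp.mapDomain_id
  map_comp g g' := by
    refine ConcreteCategory.hom_ext _ _ fun p => ?_
    exact Subtype.ext (Finsupp.mapDomain_comp (v := p.1) (f := ⇑g) (g := ⇑g'))

/-- The Dirac natural transformation `δ_X : X → D_R X`. -/
noncomputable def diracN (R : Type u) [CommSemiring R] (X : SSet.{u}) :
    X ⟶ X ⋙ DistF R where
  app Δ := ↾fun x => Dist.pure x
  naturality Δ Δ' θ := by
    refine ConcreteCategory.hom_ext _ _ fun x => ?_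
    exact Subtype.ext (Finsupp.mapDomain_single).symm

/-- A simplicial distribution on a simplicial set map `f : E → X`:
a simplicial set map `p : X → D_R E` with `D_R f ∘ p = δ_X`. -/
noncomputable def SDist (R : Type u) [CommSemiring R] {E X : SSet.{u}} (f : E ⟶ X) :
    Type u :=
  {p : X ⟶ E ⋙ DistF R // p ≫ Functor.whiskerRight f (DistF R) = diracN R X}

/-- Sections of a simplicial set map. -/
def SSetSection {E X : SSet.{u}} (f : E ⟶ X) : Type u := {s : X ⟶ E // s ≫ f = 𝟙 X}

/-- Noncontextuality of a simplicial distribution: it is a mixture of the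
deterministic distributions coming from sections, i.e. it is in the image of
`Θ : D_R(sections of f) → sDist(f)`. -/
noncomputable def SSetNC (R : Type u) [CommSemiring R] {E X : SSet.{u}} (f : E ⟶ X)
    (q : SDist R f) : Prop :=
  ∃ d : Dist R (SSetSection f), ∀ (Δ : SimplexCategoryᵒᵖ) (x : X.obj Δ),
    q.1.app Δ x = Dist.map (fun s : SSetSection f => s.1.app Δ x) d

/-- The defining property of the simplicial distribution `N p` on `N f`
associated to an empirical model `p` on a bundle scenario `f`:
its value on an `n`-simplex `(σ₁,…,σₙ)` of `N K` at `(γ₁,…,γₙ)` is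
`p_{σ₁∪⋯∪σₙ}(γ₁∪⋯∪γₙ)` when `(N f)(γ⃗) = σ⃗` and the union is nonempty,
is `0` when `(N f)(γ⃗) ≠ σ⃗`, and is the Dirac distribution at the tuple of
empty sets when all the `σᵢ` are empty. -/
def NpSpec {V W : Type u} {Γ : SComplex V} {K : SComplex W} (f : Map Γ K)
    (R : Type u) [CommSemiring R] (p : EmpiricalModel R f)
    (q : NC K ⟶ NC Γ ⋙ DistF R) : Prop :=
  (∀ (Δ : SimplexCategoryᵒᵖ) (x : (NC K).obj Δ) (y : (NC Γ).obj Δ),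
      (NMap f).app Δ y = x →
      ∀ (hu : tot x.1 ∈ K.faces) (γ : f.fiber (tot x.1)),
        (γ : Set V) = tot y.1 → (q.app Δ x).1 y = (p.dist _ hu).1 γ) ∧
  (∀ (Δ : SimplexCategoryᵒᵖ) (x : (NC K).obj Δ) (y : (NC Γ).obj Δ),
      (NMap f).app Δ y ≠ x → (q.app Δ x).1 y = 0) ∧
  (∀ (Δ : SimplexCategoryᵒᵖ) (x : (NC K).obj Δ), tot x.1 = ∅ →
      ∀ y : (NC Γ).obj Δ, tot y.1 = ∅ → q.app Δ x = Dist.pure y)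

/-- The `i`-th edge of an `n`-simplex of a nerve space. -/
def edgeN {V : Type u} {K : SComplex V} {n : ℕ} (i : Fin n)
    (x : (NC K).obj (Opposite.op (SimplexCategory.mk n))) :
    (NC K).obj (Opposite.op (SimplexCategory.mk 1)) :=
  (NC K).map (SimplexCategory.mkOfSucc i).op x

end Ctx

namespace Ctx
open CategoryTheory SComplex
section Aux

variable {V W : Type u} {Γ : SComplex V} {K : SComplex W}

lemma singleObj_ext {n : ℕ} {M : Type u} [Monoid M] {F G : Fin (n + 1) ⥤ SingleObj M}
    (h : ∀ (i j : Fin (n + 1)) (f : i ⟶ j), (F.map f : M) = G.map f) : F = G :=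
  CategoryTheory.Functor.ext (fun _ => rfl) (fun i j f => by simpa using h i j f)

lemma singleObj_map_congr {n : ℕ} {M : Type u} [Monoid M] {F G : Fin (n + 1) ⥤ SingleObj M}
    (e : F = G) {i j : Fin (n + 1)} (f : i ⟶ j) : (F.map f : M) = G.map f := by subst e; rfl

lemma singleObj_map_self {n : ℕ} {M : Type u} [Monoid M] (F : Fin (n + 1) ⥤ SingleObj M)
    {i : Fin (n + 1)} (h : i ⟶ i) : (F.map h : M) = 1 := by
  cases Subsingleton.elim h (𝟙 i)
  rw [F.map_id]; rfl

lemma singleObj_map_eq_of_eq {n : ℕ} {M : Type u} [Monoid M] (F : Fin (n + 1) ⥤ SingleObj M)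
    {a b a' b' : Fin (n + 1)} (h : a ⟶ b) (h' : a' ⟶ b') (ea : a = a') (eb : b = b') :
    (F.map h : M) = F.map h' := by
  subst ea; subst eb
  cases Subsingleton.elim h h'
  rfl

lemma entry_subset_tot {Δ : SimplexCategoryᵒᵖ} (x : (B V).obj Δ)
    {i j : Fin (Δ.unop.len + 1)} (h : i ⟶ j) :
    UM.toSet (x.map h) ⊆ tot x := by
  intro a ha
  have comp_eq : homOfLE (Fin.zero_le (Fin.last Δ.unop.len))
      = homOfLE (Fin.zero_le i) ≫ (h ≫ homOfLE (Fin.le_last j)) := Subsingleton.elim _ _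
  have e : x.map (homOfLE (Fin.zero_le (Fin.last Δ.unop.len)))
      = x.map (homOfLE (Fin.zero_le i)) ≫ (x.map h ≫ x.map (homOfLE (Fin.le_last j))) := by
    rw [comp_eq, x.map_comp, x.map_comp]
  show a ∈ UM.toSet (x.map (homOfLE (Fin.zero_le (Fin.last Δ.unop.len))))
  rw [e, SingleObj.comp_as_mul, SingleObj.comp_as_mul, UM.toSet_mul, UM.toSet_mul]
  exact Or.inl (Or.inr ha)

end Aux

section Lift

variable {V W : Type u} {Γ : SComplex V} {K : SComplex W}

lemma UM.ext {a b : UM V} (h : UM.toSet a = UM.toSet b) : a = b := h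

@[simp] lemma UM.toSet_ofSet (a : Set V) : (UM.ofSet a).toSet = a := rfl

/-- The termwise lift of a simplex of `B W` along `f`, relative to a subset `γ ⊆ V`. -/
def liftFun (f : Map Γ K) (γ : Set V) {n : ℕ} (x : Fin (n + 1) ⥤ SingleObj (UM W)) :
    Fin (n + 1) ⥤ SingleObj (UM V) where
  obj _ := SingleObj.star (UM V)
  map {i j} h := UM.ofSet {v ∈ γ | f.toFun v ∈ UM.toSet (x.map h)}
  map_id i := by
    have h1 : UM.toSet (x.map (𝟙 i)) = ∅ := by rw [x.map_id]; rfl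
    show UM.ofSet {v ∈ γ | f.toFun v ∈ UM.toSet (x.map (𝟙 i))} = (1 : UM V)
    rw [h1]
    refine UM.ext ?_
    rw [UM.toSet_ofSet, UM.toSet_one]
    ext v; simp
  map_comp {i j k} h h' := UM.ext (by
    have e : UM.toSet (x.map (h ≫ h')) = UM.toSet (x.map h') ∪ UM.toSet (x.map h) := by
      rw [x.map_comp, SingleObj.comp_as_mul, UM.toSet_mul]
    rw [SingleObj.comp_as_mul, UM.toSet_mul, UM.toSet_ofSet, UM.toSet_ofSet,
      UM.toSet_ofSet, e]
    ext v
    simp only [Set.mem_setOf_eq, Set.mem_union]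
    tauto)

lemma liftFun_map (f : Map Γ K) (γ : Set V) {n : ℕ} (x : Fin (n + 1) ⥤ SingleObj (UM W))
    {i j : Fin (n + 1)} (h : i ⟶ j) :
    UM.toSet ((liftFun f γ x).map h) = {v ∈ γ | f.toFun v ∈ UM.toSet (x.map h)} := rfl

lemma tot_liftFun (f : Map Γ K) (γ : Set V) {Δ : SimplexCategoryᵒᵖ} (x : (B W).obj Δ) :
    tot (liftFun f γ x : (B V).obj Δ) = {v ∈ γ | f.toFun v ∈ tot x} := rfl

lemma tot_liftFun_eq (f : Map Γ K) (γ : Set V) {Δ : SimplexCategoryᵒᵖ} (x : (B W).obj Δ)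
    (him : f.toFun '' γ = tot x) : tot (liftFun f γ x : (B V).obj Δ) = γ := by
  rw [tot_liftFun]
  ext v
  refine ⟨fun h => h.1, fun hv => ⟨hv, ?_⟩⟩
  rw [← him]
  exact Set.mem_image_of_mem _ hv

lemma tot_liftFun_empty (f : Map Γ K) {Δ : SimplexCategoryᵒᵖ} (x : (B W).obj Δ) :
    tot (liftFun f (∅ : Set V) x : (B V).obj Δ) = ∅ := by
  rw [tot_liftFun]
  ext v; simp

/-- The lift of a simplex of `N K` along `f` determined by a fiber element. -/
def liftNC (f : Map Γ K) {Δ : SimplexCategoryᵒᵖ} (x : (NC K).obj Δ)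
    (γ : f.fiber (tot x.1)) : (NC Γ).obj Δ :=
  ⟨liftFun f γ.1 x.1, Or.inr (by rw [tot_liftFun_eq f γ.1 x.1 γ.2.2]; exact γ.2.1)⟩

/-- The empty lift of a simplex of `N K`. -/
def emptyNC (f : Map Γ K) {Δ : SimplexCategoryᵒᵖ} (x : (NC K).obj Δ) : (NC Γ).obj Δ :=
  ⟨liftFun f (∅ : Set V) x.1, Or.inl (tot_liftFun_empty f x.1)⟩

lemma tot_liftNC (f : Map Γ K) {Δ : SimplexCategoryᵒᵖ} (x : (NC K).obj Δ)
    (γ : f.fiber (tot x.1)) : tot (liftNC f x γ).1 = γ.1 :=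
  tot_liftFun_eq f γ.1 x.1 γ.2.2

lemma NMap_map (f : Map Γ K) {Δ : SimplexCategoryᵒᵖ} (y : (NC Γ).obj Δ)
    {i j : Fin (Δ.unop.len + 1)} (h : i ⟶ j) :
    UM.toSet (((NMap f).app Δ y).1.map h) = f.toFun '' UM.toSet (y.1.map h) := rfl

lemma tot_NMap (f : Map Γ K) {Δ : SimplexCategoryᵒᵖ} (y : (NC Γ).obj Δ) :
    tot ((NMap f).app Δ y).1 = f.toFun '' tot y.1 := rfl

lemma image_sep (f : Map Γ K) {γ : Set V} {s : Set W} (hs : s ⊆ f.toFun '' γ) :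
    f.toFun '' {v ∈ γ | f.toFun v ∈ s} = s := by
  ext w
  constructor
  · rintro ⟨v, ⟨hv, hfv⟩, rfl⟩; exact hfv
  · intro hw
    obtain ⟨v, hv, rfl⟩ := hs hw
    exact ⟨v, ⟨hv, hw⟩, rfl⟩

lemma NMap_liftFun (f : Map Γ K) {Δ : SimplexCategoryᵒᵖ} (x : (NC K).obj Δ) {γ : Set V}
    (m : tot (liftFun f γ x.1 : (B V).obj Δ) = ∅ ∨ tot (liftFun f γ x.1 : (B V).obj Δ) ∈ Γ.faces)
    (hcov : ∀ {i j : Fin (Δ.unop.len + 1)} (h : i ⟶ j),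
      UM.toSet (x.1.map h) ⊆ f.toFun '' γ) :
    (NMap f).app Δ ⟨liftFun f γ x.1, m⟩ = x := by
  refine Subtype.ext (singleObj_ext fun i j h => UM.ext ?_)
  rw [NMap_map f ⟨liftFun f γ x.1, m⟩ h]
  exact image_sep f (hcov h)

lemma NMap_liftNC (f : Map Γ K) {Δ : SimplexCategoryᵒᵖ} (x : (NC K).obj Δ)
    (γ : f.fiber (tot x.1)) : (NMap f).app Δ (liftNC f x γ) = x :=
  NMap_liftFun f x _ (fun {i j} h => by
    have hs := entry_subset_tot x.1 h
    rw [← γ.2.2] at hs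
    exact hs)

lemma NMap_emptyNC (f : Map Γ K) {Δ : SimplexCategoryᵒᵖ} (x : (NC K).obj Δ)
    (hx : tot x.1 = ∅) : (NMap f).app Δ (emptyNC f x) = x := by
  refine NMap_liftFun f x _ (fun {i j} h => ?_)
  have := entry_subset_tot x.1 h
  rw [hx] at this
  rw [Set.image_empty]
  exact this

lemma lift_unique (f : Map Γ K) (hd : f.DiscV) {Δ : SimplexCategoryᵒᵖ}
    (x : (NC K).obj Δ) (y : (NC Γ).obj Δ) (he : (NMap f).app Δ y = x) :
    y.1 = liftFun f (tot y.1) x.1 := by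
  refine singleObj_ext fun i j h => UM.ext ?_
  have hent : f.toFun '' UM.toSet (y.1.map h) = UM.toSet (x.1.map h) := by
    have e := singleObj_map_congr (congrArg Subtype.val he) h
    rw [← NMap_map f y h]
    exact congrArg UM.toSet e
  show UM.toSet (y.1.map h) = {v ∈ tot y.1 | f.toFun v ∈ UM.toSet (x.1.map h)}
  rw [← hent]
  ext v
  constructor
  · intro hv
    exact ⟨entry_subset_tot y.1 h hv, Set.mem_image_of_mem _ hv⟩
  · rintro ⟨hvtot, w, hw, hfw⟩
    by_cases hvw : v = w
    · exact hvw ▸ hw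
    · exfalso
      have hto : tot y.1 ∈ Γ.faces := by
        rcases y.2 with h0 | hfc
        · rw [h0] at hvtot; exact absurd hvtot (Set.notMem_empty v)
        · exact hfc
      have hpair : ({w, v} : Set V) ∈ Γ.faces := by
        refine Γ.down_closed hto ?_ ⟨w, by left; rfl⟩
        rintro z (rfl | rfl)
        · exact entry_subset_tot y.1 h hw
        · exact hvtot
      exact hd w v (fun e => hvw e.symm) hfw hpair

end Lift

section DistLemmas

variable {R : Type u} [CommSemiring R]

lemma Dist.map_map {U U' U'' : Type u} (g : U' → U'') (h : U → U') (p : Dist R U) :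
    Dist.map g (Dist.map h p) = Dist.map (g ∘ h) p :=
  Subtype.ext Finsupp.mapDomain_comp.symm

lemma Dist.map_congr {U U' : Type u} {g g' : U → U'} (p : Dist R U)
    (h : ∀ a ∈ p.1.support, g a = g' a) : Dist.map g p = Dist.map g' p :=
  Subtype.ext (Finsupp.mapDomain_congr h)

lemma Dist.map_id' {U : Type u} (g : U → U) (p : Dist R U)
    (h : ∀ a ∈ p.1.support, g a = a) : Dist.map g p = p :=
  Subtype.ext ((Finsupp.mapDomain_congr h).trans Finsupp.mapDomain_id)

lemma Dist.map_pure {U U' : Type u} (g : U → U') (a : U) :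
    Dist.map g (Dist.pure a : Dist R U) = Dist.pure (g a) :=
  Subtype.ext Finsupp.mapDomain_single

lemma Dist.map_const {U U' : Type u} (c : U') (p : Dist R U) :
    Dist.map (fun _ => c) p = Dist.pure c := by
  refine Subtype.ext ?_
  show Finsupp.mapDomain _ p.1 = Finsupp.single c 1
  have e : Finsupp.mapDomain (fun _ => c) p.1
      = Finsupp.single c (p.1.sum fun _ r => r) := by
    rw [Finsupp.mapDomain, Finsupp.sum, Finsupp.sum, Finsupp.single_finset_sum]
  rw [e, p.2]

lemma zsf_sum {ι : Type u} (hR : ∀ a b : R, a + b = 0 → a = 0 ∧ b = 0)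
    (s : Finset ι) (g : ι → R) (h : ∑ i ∈ s, g i = 0) : ∀ i ∈ s, g i = 0 := by
  classical
  induction s using Finset.induction_on with
  | empty => intro i hi; simp at hi
  | insert a s' hnot ih =>
    rw [Finset.sum_insert hnot] at h
    obtain ⟨h1, h2⟩ := hR _ _ h
    intro i hi
    rcases Finset.mem_insert.mp hi with rfl | hi'
    · exact h1
    · exact ih h2 i hi'

lemma supp_of_map_pure {U U' : Type u} (hR : ∀ a b : R, a + b = 0 → a = 0 ∧ b = 0)
    {g : U → U'} {q : Dist R U} {c : U'} (h : Dist.map g q = Dist.pure c)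
    {y : U} (hy : g y ≠ c) : q.1 y = 0 := by
  classical
  by_cases hy' : y ∈ q.1.support
  · have e : Finsupp.mapDomain g q.1 = Finsupp.single c 1 := congrArg Subtype.val h
    have e2 : (Finsupp.mapDomain g q.1) (g y) = 0 := by
      rw [e, Finsupp.single_apply, if_neg (fun e' => hy e'.symm)]
    rw [Finsupp.mapDomain, Finsupp.sum_apply, Finsupp.sum] at e2
    have := zsf_sum hR _ _ e2 y hy'
    rwa [Finsupp.single_eq_same] at this
  · exact Finsupp.notMem_support_iff.mp hy'

lemma eq_pure_of_support {U : Type u} (q : Dist R U) (y₀ : U)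
    (h : ∀ y, y ≠ y₀ → q.1 y = 0) : q = Dist.pure y₀ := by
  classical
  have hsupp : q.1.support ⊆ {y₀} := by
    intro y hy
    rw [Finset.mem_singleton]
    by_contra hne
    exact (Finsupp.mem_support_iff.mp hy) (h y hne)
  have hval : q.1 y₀ = 1 := by
    have hs := q.2
    rw [Finsupp.sum, Finset.sum_subset hsupp
      (fun x _ hx => Finsupp.notMem_support_iff.mp hx), Finset.sum_singleton] at hs
    exact hs
  refine Subtype.ext (Finsupp.ext fun y => ?_)
  show q.1 y = Finsupp.single y₀ 1 y
  by_cases hy : y = y₀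
  · subst hy; rw [Finsupp.single_eq_same, hval]
  · rw [Finsupp.single_eq_of_ne' (fun e => hy e.symm), h y hy]

end DistLemmas

section Zeta

variable {V W : Type u} {Γ : SComplex V} {K : SComplex W}

lemma empty_not_face (K : SComplex W) : (∅ : Set W) ∉ K.faces :=
  fun h => (K.nonempty_mem _ h).ne_empty rfl

lemma liftFun_congr (f : Map Γ K) {γ₁ γ₂ : Set V} {n : ℕ}
    (x : Fin (n + 1) ⥤ SingleObj (UM W)) (e : γ₁ = γ₂) : liftFun f γ₁ x = liftFun f γ₂ x := by
  rw [e]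

lemma map_liftFun (f : Map Γ K) {Δ Δ' : SimplexCategoryᵒᵖ} (θ : Δ ⟶ Δ') (x : (B W).obj Δ)
    (γ : Set V) :
    (B V).map θ (liftFun f γ x : (B V).obj Δ)
      = (liftFun f {v ∈ γ | f.toFun v ∈ tot ((B W).map θ x)} ((B W).map θ x) : (B V).obj Δ') := by
  refine singleObj_ext fun i j h => UM.ext ?_
  have hsub := entry_subset_tot ((B W).map θ x) h
  show {v ∈ γ | f.toFun v ∈ UM.toSet (((B W).map θ x).map h)}
      = {v ∈ {v ∈ γ | f.toFun v ∈ tot ((B W).map θ x)} |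
          f.toFun v ∈ UM.toSet (((B W).map θ x).map h)}
  ext v
  simp only [Set.mem_setOf_eq]
  exact ⟨fun h' => ⟨⟨h'.1, hsub h'.2⟩, h'.2⟩, fun h' => ⟨h'.1.1, h'.2⟩⟩

lemma map_liftNC_a (f : Map Γ K) {Δ Δ' : SimplexCategoryᵒᵖ} (θ : Δ ⟶ Δ')
    (x : (NC K).obj Δ) (γ : f.fiber (tot x.1))
    (hx' : tot ((NC K).map θ x).1 ∈ K.faces) :
    (NC Γ).map θ (liftNC f x γ)
      = liftNC f ((NC K).map θ x) (f.resFiber hx' (tot_map_subset θ x.1) γ) :=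
  Subtype.ext (map_liftFun f θ x.1 γ.1)

lemma map_emptyNC (f : Map Γ K) {Δ Δ' : SimplexCategoryᵒᵖ} (θ : Δ ⟶ Δ')
    (x : (NC K).obj Δ) :
    (NC Γ).map θ (emptyNC f x) = emptyNC f ((NC K).map θ x) := by
  refine Subtype.ext ?_
  rw [show ((NC Γ).map θ (emptyNC f x)).1 = (B V).map θ (liftFun f ∅ x.1) from rfl,
    map_liftFun]
  exact liftFun_congr f _ (by ext v; simp)

lemma map_liftNC_c (f : Map Γ K) {Δ Δ' : SimplexCategoryᵒᵖ} (θ : Δ ⟶ Δ')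
    (x : (NC K).obj Δ) (γ : f.fiber (tot x.1))
    (h0 : tot ((NC K).map θ x).1 = ∅) :
    (NC Γ).map θ (liftNC f x γ) = emptyNC f ((NC K).map θ x) := by
  refine Subtype.ext ?_
  rw [show ((NC Γ).map θ (liftNC f x γ)).1 = (B V).map θ (liftFun f γ.1 x.1) from rfl,
    map_liftFun]
  refine liftFun_congr f _ ?_
  rw [show tot ((B W).map θ x.1) = (∅ : Set W) from h0]
  ext v; simp

open scoped Classical in
/-- The simplicial distribution associated to an empirical model. -/
noncomputable def zeta (f : Map Γ K) (R : Type u) [CommSemiring R] (p : EmpiricalModel R f) :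
    NC K ⟶ NC Γ ⋙ DistF R where
  app Δ := ↾fun x =>
    if h : tot x.1 ∈ K.faces then Dist.map (liftNC f x) (p.dist _ h)
    else Dist.pure (emptyNC f x)
  naturality Δ Δ' θ := by
    refine ConcreteCategory.hom_ext _ _ fun x => ?_
    show (if h : tot ((NC K).map θ x).1 ∈ K.faces
        then Dist.map (liftNC f ((NC K).map θ x)) (p.dist _ h)
        else Dist.pure (emptyNC f ((NC K).map θ x)))
      = Dist.map ((NC Γ).map θ)
          (if h : tot x.1 ∈ K.faces then Dist.map (liftNC f x) (p.dist _ h)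
           else Dist.pure (emptyNC f x))
    by_cases h : tot x.1 ∈ K.faces
    · by_cases h' : tot ((NC K).map θ x).1 ∈ K.faces
      · rw [dif_pos h, dif_pos h', ← p.compat _ h _ h' (tot_map_subset θ x.1),
          Dist.map_map, Dist.map_map]
        refine congrArg (fun g => Dist.map g (p.dist _ h)) ?_
        funext γ
        exact (map_liftNC_a f θ x γ h').symm
      · have h0 : tot ((NC K).map θ x).1 = ∅ := ((NC K).map θ x).2.resolve_right h'
        rw [dif_pos h, dif_neg h', Dist.map_map]
        rw [show ((NC Γ).map θ ∘ liftNC f x) = fun _ => emptyNC f ((NC K).map θ x) from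
          funext fun γ => map_liftNC_c f θ x γ h0, Dist.map_const]
    · have h0 : tot x.1 = ∅ := x.2.resolve_right h
      have h0' : tot ((NC K).map θ x).1 = ∅ := by
        have hsub := tot_map_subset θ x.1
        rw [h0] at hsub
        exact Set.subset_empty_iff.mp hsub
      have h' : ¬ tot ((NC K).map θ x).1 ∈ K.faces := by
        rw [h0']; exact empty_not_face K
      rw [dif_neg h, dif_neg h', Dist.map_pure, map_emptyNC]

lemma zeta_app_face (f : Map Γ K) (R : Type u) [CommSemiring R] (p : EmpiricalModel R f)
    {Δ : SimplexCategoryᵒᵖ} (x : (NC K).obj Δ) (h : tot x.1 ∈ K.faces) :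
    (zeta f R p).app Δ x = Dist.map (liftNC f x) (p.dist _ h) := dif_pos h

lemma zeta_app_empty (f : Map Γ K) (R : Type u) [CommSemiring R] (p : EmpiricalModel R f)
    {Δ : SimplexCategoryᵒᵖ} (x : (NC K).obj Δ) (h : ¬ tot x.1 ∈ K.faces) :
    (zeta f R p).app Δ x = Dist.pure (emptyNC f x) := dif_neg h

lemma zeta_dirac (f : Map Γ K) (R : Type u) [CommSemiring R] (p : EmpiricalModel R f) :
    zeta f R p ≫ CategoryTheory.Functor.whiskerRight (NMap f) (DistF R) = diracN R (NC K) := by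
  refine NatTrans.ext (funext fun Δ => ConcreteCategory.hom_ext _ _ fun x => ?_)
  show Dist.map ((NMap f).app Δ) ((zeta f R p).app Δ x) = Dist.pure x
  by_cases h : tot x.1 ∈ K.faces
  · rw [zeta_app_face f R p x h, Dist.map_map,
      show ((NMap f).app Δ ∘ liftNC f x) = fun _ => x from
        funext fun γ => NMap_liftNC f x γ, Dist.map_const]
  · rw [zeta_app_empty f R p x h, Dist.map_pure,
      NMap_emptyNC f x (x.2.resolve_right h)]

lemma liftNC_injective (f : Map Γ K) {Δ : SimplexCategoryᵒᵖ} (x : (NC K).obj Δ) :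
    Function.Injective (liftNC f x) := by
  intro γ₁ γ₂ e
  refine Subtype.ext ?_
  rw [← tot_liftNC f x γ₁, ← tot_liftNC f x γ₂, e]

lemma zeta_spec (f : Map Γ K) (hd : f.DiscV) (R : Type u) [CommSemiring R]
    (p : EmpiricalModel R f) : NpSpec f R p (zeta f R p) := by
  refine ⟨?_, ?_, ?_⟩
  · intro Δ x y he hu γ hγ
    rw [zeta_app_face f R p x hu]
    have hy : liftNC f x γ = y := Subtype.ext (by
      show liftFun f γ.1 x.1 = y.1
      rw [lift_unique f hd x y he, hγ])
    rw [← hy]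
    exact Finsupp.mapDomain_apply (liftNC_injective f x) _ γ
  · intro Δ x y hne
    by_cases h : tot x.1 ∈ K.faces
    · rw [zeta_app_face f R p x h]
      refine Finsupp.mapDomain_notin_range _ _ ?_
      rintro ⟨γ, rfl⟩
      exact hne (NMap_liftNC f x γ)
    · rw [zeta_app_empty f R p x h]
      show Finsupp.single (emptyNC f x) 1 y = 0
      refine Finsupp.single_eq_of_ne ?_
      rintro rfl
      exact hne (NMap_emptyNC f x (x.2.resolve_right h))
  · intro Δ x hx y hy
    have h : ¬ tot x.1 ∈ K.faces := by rw [hx]; exact empty_not_face K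
    rw [zeta_app_empty f R p x h]
    refine congrArg Dist.pure ?_
    refine Subtype.ext (singleObj_ext fun i j hij => UM.ext ?_)
    show {v ∈ (∅ : Set V) | f.toFun v ∈ UM.toSet (x.1.map hij)} = _
    have h1 : UM.toSet (y.1.map hij) = (∅ : Set V) := by
      refine Set.subset_empty_iff.mp ?_
      have := entry_subset_tot y.1 hij
      rwa [hy] at this
    rw [h1]
    ext v; simp

end Zeta

section Step

variable {V W U : Type u} {Γ : SComplex V} {K : SComplex W}

/-- The set of outcomes between positions `i` and `j` of a "step" simplex. -/
def stepSet (c : ℕ → Set W) (i j : ℕ) : Set W := {w | ∃ t, i ≤ t ∧ t + 1 ≤ j ∧ w ∈ c t}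

lemma stepSet_self (c : ℕ → Set W) {i j : ℕ} (h : j ≤ i) : stepSet c i j = ∅ := by
  ext w
  simp only [stepSet, Set.mem_setOf_eq, Set.mem_empty_iff_false, iff_false]
  rintro ⟨t, h1, h2, _⟩
  omega

/-- The simplex of `B W` with entries determined by a step function. -/
def stepFun (c : ℕ → Set W) (n : ℕ) : Fin (n + 1) ⥤ SingleObj (UM W) where
  obj _ := SingleObj.star (UM W)
  map {i j} _ := UM.ofSet (stepSet c i.val j.val)
  map_id i := by
    show UM.ofSet (stepSet c i.val i.val) = (1 : UM W)
    refine UM.ext ?_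
    rw [UM.toSet_ofSet, UM.toSet_one, stepSet_self c le_rfl]
  map_comp {i j k} h h' := UM.ext (by
    rw [SingleObj.comp_as_mul, UM.toSet_mul, UM.toSet_ofSet, UM.toSet_ofSet, UM.toSet_ofSet]
    have hij : i.val ≤ j.val := leOfHom h
    have hjk : j.val ≤ k.val := leOfHom h'
    ext w
    simp only [stepSet, Set.mem_setOf_eq, Set.mem_union]
    constructor
    · rintro ⟨t, h1, h2, hw⟩
      by_cases ht : t + 1 ≤ j.val
      · exact Or.inr ⟨t, h1, ht, hw⟩
      · exact Or.inl ⟨t, by omega, h2, hw⟩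
    · rintro (⟨t, h1, h2, hw⟩ | ⟨t, h1, h2, hw⟩)
      · exact ⟨t, by omega, h2, hw⟩
      · exact ⟨t, h1, by omega, hw⟩)

lemma stepFun_map (c : ℕ → Set W) (n : ℕ) {i j : Fin (n + 1)} (h : i ⟶ j) :
    UM.toSet ((stepFun c n).map h) = stepSet c i.val j.val := rfl

lemma tot_stepFun (c : ℕ → Set W) (n : ℕ) :
    tot (V := W) (Δ := Opposite.op (SimplexCategory.mk n)) (stepFun c n) = stepSet c 0 n := by
  show stepSet c (0 : Fin (n + 1)).val (Fin.last n).val = stepSet c 0 n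
  rw [Fin.val_zero, Fin.val_last]

lemma stepSet_one (σ : Set W) : stepSet (fun _ => σ) 0 1 = σ := by
  ext w
  simp only [stepSet, Set.mem_setOf_eq]
  exact ⟨fun ⟨_, _, _, hw⟩ => hw, fun hw => ⟨0, le_rfl, le_rfl, hw⟩⟩

/-- The one-simplex of `N K` with entry a given simplex. -/
def oneNC (σ : Set W) (hσ : σ ∈ K.faces) :
    (NC K).obj (Opposite.op (SimplexCategory.mk 1)) :=
  ⟨stepFun (fun _ => σ) 1, Or.inr (by rw [tot_stepFun, stepSet_one]; exact hσ)⟩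

lemma tot_oneNC (σ : Set W) (hσ : σ ∈ K.faces) : tot (oneNC σ hσ).1 = σ := by
  rw [show tot (oneNC σ hσ).1 = tot (V := W) (Δ := Opposite.op (SimplexCategory.mk 1))
    (stepFun (fun _ => σ) 1) from rfl, tot_stepFun, stepSet_one]

/-- Entries of the two-simplex `(σ', σ)`. -/
def twoC (σ' σ : Set W) : ℕ → Set W := fun t => if t = 0 then σ' else σ

lemma stepSet_twoC_01 (σ' σ : Set W) : stepSet (twoC σ' σ) 0 1 = σ' := by
  ext w
  simp only [stepSet, twoC, Set.mem_setOf_eq]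
  constructor
  · rintro ⟨t, _, h2, hw⟩
    have : t = 0 := by omega
    subst this
    simpa using hw
  · intro hw
    exact ⟨0, le_rfl, le_rfl, by simpa using hw⟩

lemma stepSet_twoC_02 (σ' σ : Set W) : stepSet (twoC σ' σ) 0 2 = σ' ∪ σ := by
  ext w
  simp only [stepSet, twoC, Set.mem_setOf_eq, Set.mem_union]
  constructor
  · rintro ⟨t, _, h2, hw⟩
    rcases (by omega : t = 0 ∨ t = 1) with rfl | rfl
    · exact Or.inl (by simpa using hw)
    · exact Or.inr (by simpa using hw)
  · rintro (hw | hw)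
    · exact ⟨0, le_rfl, by omega, by simpa using hw⟩
    · exact ⟨1, by omega, le_rfl, by simpa using hw⟩

/-- The two-simplex of `N K` with entries `(σ', σ)`, for `σ' ⊆ σ`. -/
def twoNC (σ' σ : Set W) (hsub : σ' ⊆ σ) (hσ : σ ∈ K.faces) :
    (NC K).obj (Opposite.op (SimplexCategory.mk 2)) :=
  ⟨stepFun (twoC σ' σ) 2, Or.inr (by
    rw [tot_stepFun, stepSet_twoC_02, Set.union_eq_self_of_subset_left hsub]
    exact hσ)⟩

lemma tot_twoNC (σ' σ : Set W) (hsub : σ' ⊆ σ) (hσ : σ ∈ K.faces) :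
    tot (twoNC σ' σ hsub hσ : (NC K).obj _).1 = σ := by
  rw [show tot (twoNC σ' σ hsub hσ : (NC K).obj _).1 = tot (V := W)
    (Δ := Opposite.op (SimplexCategory.mk 2)) (stepFun (twoC σ' σ) 2) from rfl, tot_stepFun,
    stepSet_twoC_02,
    Set.union_eq_self_of_subset_left hsub]

/-- The map `[1] → [n]` hitting the endpoints. -/
def thetaTot (Δ : SimplexCategoryᵒᵖ) : Δ ⟶ Opposite.op (SimplexCategory.mk 1) :=
  Quiver.Hom.op (SimplexCategory.Hom.mk
    ⟨fun i => if i.val = 0 then 0 else Fin.last Δ.unop.len, by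
      intro i j hij
      dsimp only
      by_cases hi : i.val = 0
      · rw [if_pos hi]
        exact Fin.zero_le _
      · have hj : ¬ j.val = 0 := by
          have := (Fin.le_def.mp hij)
          omega
        rw [if_neg hi, if_neg hj]⟩ : SimplexCategory.mk 1 ⟶ Δ.unop)

lemma map_thetaTot_fun {Δ : SimplexCategoryᵒᵖ} (x : (B U).obj Δ) :
    (B U).map (thetaTot Δ) x
      = (stepFun (fun _ => tot x) 1 : (B U).obj (Opposite.op (SimplexCategory.mk 1))) := by
  refine singleObj_ext fun i j h => UM.ext ?_
  rw [show UM.toSet ((stepFun (fun _ => tot x) 1).map h)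
      = stepSet (fun _ => tot x) i.val j.val from rfl]
  rcases (leOfHom h).lt_or_eq with hlt | he
  · have h2 : (j : ℕ) < 2 := j.isLt
    have h3 : (i : ℕ) < (j : ℕ) := Fin.lt_def.mp hlt
    have hi : i = 0 := Fin.ext (by rw [Fin.val_zero]; omega)
    have hj : j = 1 := Fin.ext (by rw [Fin.val_one]; omega)
    subst hi; subst hj
    have ea : (SimplexCategory.toCat.map (thetaTot Δ).unop).toFunctor.obj (0 : Fin 2)
        = (0 : Fin (Δ.unop.len + 1)) := by
      show (if (0 : Fin 2).val = 0 then (0 : Fin (Δ.unop.len + 1)) else Fin.last _) = 0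
      simp
    have eb : (SimplexCategory.toCat.map (thetaTot Δ).unop).toFunctor.obj (1 : Fin 2)
        = Fin.last Δ.unop.len := by
      show (if (1 : Fin 2).val = 0 then (0 : Fin (Δ.unop.len + 1)) else Fin.last _)
        = Fin.last _
      simp
    rw [show UM.toSet (((B U).map (thetaTot Δ) x).map h)
        = UM.toSet (x.map ((SimplexCategory.toCat.map (thetaTot Δ).unop).toFunctor.map h)) from rfl]
    rw [singleObj_map_eq_of_eq x ((SimplexCategory.toCat.map (thetaTot Δ).unop).toFunctor.map h)
      (homOfLE (Fin.zero_le (Fin.last Δ.unop.len))) ea eb]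
    rw [show stepSet (fun _ => tot x) (0 : Fin 2).val (1 : Fin 2).val
        = stepSet (fun _ => tot x) 0 1 from rfl, stepSet_one]
    rfl
  · subst he
    rw [show UM.toSet (((B U).map (thetaTot Δ) x).map h)
        = UM.toSet (x.map ((SimplexCategory.toCat.map (thetaTot Δ).unop).toFunctor.map h)) from rfl]
    rw [singleObj_map_self x ((SimplexCategory.toCat.map (thetaTot Δ).unop).toFunctor.map h),
      UM.toSet_one, stepSet_self _ le_rfl]

lemma tot_map_thetaTot {Δ : SimplexCategoryᵒᵖ} (x : (B U).obj Δ) :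
    tot ((B U).map (thetaTot Δ) x) = tot x := by
  rw [map_thetaTot_fun, tot_stepFun, stepSet_one]

lemma map_thetaTot_oneNC {Δ : SimplexCategoryᵒᵖ} (x : (NC K).obj Δ)
    (h : tot x.1 ∈ K.faces) : (NC K).map (thetaTot Δ) x = oneNC (tot x.1) h :=
  Subtype.ext (map_thetaTot_fun x.1)

end Step

section Faces

variable {V W U : Type u} {Γ : SComplex V} {K : SComplex W}

/-- The face `[1] → [2]` keeping the first entry. -/
def phiA : (SimplexCategory.mk 1 : SimplexCategory) ⟶ SimplexCategory.mk 2 :=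
  SimplexCategory.Hom.mk ⟨fun i => ⟨i.val, by have h2 : (i : ℕ) < 2 := i.isLt; show (i : ℕ) < 3; omega⟩, fun i j hij => hij⟩

/-- The face `[1] → [2]` merging the two entries. -/
def phiB : (SimplexCategory.mk 1 : SimplexCategory) ⟶ SimplexCategory.mk 2 :=
  SimplexCategory.Hom.mk ⟨fun i => if i.val = 0 then 0 else 2, by
    intro i j hij
    dsimp only
    by_cases hi : i.val = 0
    · rw [if_pos hi]
      exact Fin.zero_le _
    · have hj : ¬ j.val = 0 := by
        have := Fin.le_def.mp hij
        omega
      rw [if_neg hi, if_neg hj]⟩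

lemma map_phiA_stepFun (c : ℕ → Set W) :
    (B W).map (Quiver.Hom.op phiA) (stepFun c 2 : (B W).obj (Opposite.op (SimplexCategory.mk 2)))
      = (stepFun c 1 : (B W).obj (Opposite.op (SimplexCategory.mk 1))) :=
  singleObj_ext fun _ _ _ => rfl

lemma map_phiB_stepFun (σ' σ : Set W) (hsub : σ' ⊆ σ) :
    (B W).map (Quiver.Hom.op phiB)
        (stepFun (twoC σ' σ) 2 : (B W).obj (Opposite.op (SimplexCategory.mk 2)))
      = (stepFun (fun _ => σ) 1 : (B W).obj (Opposite.op (SimplexCategory.mk 1))) := by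
  refine singleObj_ext fun i j h => UM.ext ?_
  show stepSet (twoC σ' σ) (phiB.toOrderHom i).val (phiB.toOrderHom j).val
      = stepSet (fun _ => σ) i.val j.val
  rcases (leOfHom h).lt_or_eq with hlt | he
  · have h2 : (j : ℕ) < 2 := j.isLt
    have h3 : (i : ℕ) < (j : ℕ) := Fin.lt_def.mp hlt
    have hi : i = 0 := Fin.ext (by rw [Fin.val_zero]; omega)
    have hj : j = 1 := Fin.ext (by rw [Fin.val_one]; omega)
    subst hi; subst hj
    have e0 : (phiB.toOrderHom (0 : Fin 2)).val = 0 := by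
      simp [phiB, SimplexCategory.Hom.toOrderHom_mk]
    have e1 : (phiB.toOrderHom (1 : Fin 2)).val = 2 := by
      simp [phiB, SimplexCategory.Hom.toOrderHom_mk]
    rw [e0, e1, Fin.val_zero, Fin.val_one, stepSet_twoC_02, stepSet_one,
      Set.union_eq_self_of_subset_left hsub]
  · subst he
    have emono : (phiB.toOrderHom i).val ≤ (phiB.toOrderHom i).val := le_rfl
    rw [stepSet_self _ le_rfl, stepSet_self _ le_rfl]

lemma tot_map_phiA (y : (B U).obj (Opposite.op (SimplexCategory.mk 2))) :
    tot ((B U).map (Quiver.Hom.op phiA) y)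
      = UM.toSet (y.map (homOfLE (by decide : (0 : Fin 3) ≤ 1))) := by
  have ea : (SimplexCategory.toCat.map phiA).toFunctor.obj (0 : Fin 2) = (0 : Fin 3) := by
    show phiA.toOrderHom (0 : Fin 2) = (0 : Fin 3)
    exact Fin.ext rfl
  have eb : (SimplexCategory.toCat.map phiA).toFunctor.obj (Fin.last 1) = (1 : Fin 3) := by
    show phiA.toOrderHom (Fin.last 1) = (1 : Fin 3)
    exact Fin.ext rfl
  have h01 : (0 : Fin 2) ⟶ Fin.last 1 := homOfLE (Fin.zero_le (Fin.last 1))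
  show UM.toSet (y.map ((SimplexCategory.toCat.map phiA).toFunctor.map h01)) = _
  rw [singleObj_map_eq_of_eq y ((SimplexCategory.toCat.map phiA).toFunctor.map h01)
    (homOfLE (by decide : (0 : Fin 3) ≤ 1)) ea eb]

lemma tot_map_phiB (y : (B U).obj (Opposite.op (SimplexCategory.mk 2))) :
    tot ((B U).map (Quiver.Hom.op phiB) y) = tot y := by
  have ea : (SimplexCategory.toCat.map phiB).toFunctor.obj (0 : Fin 2) = (0 : Fin 3) := by
    show phiB.toOrderHom (0 : Fin 2) = (0 : Fin 3)
    exact Fin.ext (by simp [phiB, SimplexCategory.Hom.toOrderHom_mk])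
  have eb : (SimplexCategory.toCat.map phiB).toFunctor.obj (Fin.last 1) = Fin.last 2 := by
    show phiB.toOrderHom (Fin.last 1) = Fin.last 2
    exact Fin.ext (by simp [phiB, SimplexCategory.Hom.toOrderHom_mk, Fin.last])
  have h01 : (0 : Fin 2) ⟶ Fin.last 1 := homOfLE (Fin.zero_le (Fin.last 1))
  show UM.toSet (y.map ((SimplexCategory.toCat.map phiB).toFunctor.map h01)) = _
  rw [singleObj_map_eq_of_eq y ((SimplexCategory.toCat.map phiB).toFunctor.map h01)
    (homOfLE (Fin.zero_le (Fin.last 2))) ea eb]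
  rfl

lemma map_phiA_twoNC (σ' σ : Set W) (hsub : σ' ⊆ σ) (hσ : σ ∈ K.faces)
    (hσ' : σ' ∈ K.faces) :
    (NC K).map (Quiver.Hom.op phiA) (twoNC σ' σ hsub hσ) = oneNC σ' hσ' := by
  refine Subtype.ext ?_
  show (B W).map (Quiver.Hom.op phiA) (stepFun (twoC σ' σ) 2) = stepFun (fun _ => σ') 1
  rw [map_phiA_stepFun]
  refine singleObj_ext fun i j h => UM.ext ?_
  rw [stepFun_map, stepFun_map]
  rcases (leOfHom h).lt_or_eq with hlt | he
  · have h2 : (j : ℕ) < 2 := j.isLt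
    have h3 : (i : ℕ) < (j : ℕ) := Fin.lt_def.mp hlt
    have hi : i = 0 := Fin.ext (by rw [Fin.val_zero]; omega)
    have hj : j = 1 := Fin.ext (by rw [Fin.val_one]; omega)
    subst hi; subst hj
    rw [Fin.val_zero, Fin.val_one, stepSet_twoC_01, stepSet_one]
  · subst he
    rw [stepSet_self _ le_rfl, stepSet_self _ le_rfl]

lemma map_phiB_twoNC (σ' σ : Set W) (hsub : σ' ⊆ σ) (hσ : σ ∈ K.faces) :
    (NC K).map (Quiver.Hom.op phiB) (twoNC σ' σ hsub hσ) = oneNC σ hσ :=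
  Subtype.ext (map_phiB_stepFun σ' σ hsub)

end Faces

section QSide

variable {V W : Type u} {Γ : SComplex V} {K : SComplex W}
variable {R : Type u} [CommSemiring R]

lemma resFiber_val (f : Map Γ K) {σ σ' : Set W} (hσ' : σ' ∈ K.faces) (h : σ' ⊆ σ)
    (γ : f.fiber σ) : (f.resFiber hσ' h γ).1 = {v ∈ γ.1 | f.toFun v ∈ σ'} := rfl

lemma dirac_cond (f : Map Γ K) {q : NC K ⟶ NC Γ ⋙ DistF R}
    (hq : q ≫ CategoryTheory.Functor.whiskerRight (NMap f) (DistF R) = diracN R (NC K))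
    (Δ : SimplexCategoryᵒᵖ) (x : (NC K).obj Δ) :
    Dist.map ((NMap f).app Δ) (q.app Δ x) = Dist.pure x :=
  ConcreteCategory.congr_hom (congrArg (fun α => NatTrans.app α Δ) hq) x

lemma supp_cond (hR : ∀ a b : R, a + b = 0 → a = 0 ∧ b = 0) (f : Map Γ K)
    {q : NC K ⟶ NC Γ ⋙ DistF R}
    (hq : q ≫ CategoryTheory.Functor.whiskerRight (NMap f) (DistF R) = diracN R (NC K))
    (Δ : SimplexCategoryᵒᵖ) (x : (NC K).obj Δ) {y : (NC Γ).obj Δ}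
    (hne : (NMap f).app Δ y ≠ x) : (q.app Δ x).1 y = 0 :=
  supp_of_map_pure hR (dirac_cond f hq Δ x) hne

lemma q_natural (q : NC K ⟶ NC Γ ⋙ DistF R) {Δ Δ' : SimplexCategoryᵒᵖ} (θ : Δ ⟶ Δ')
    (x : (NC K).obj Δ) :
    q.app Δ' ((NC K).map θ x) = Dist.map ((NC Γ).map θ) (q.app Δ x) :=
  ConcreteCategory.congr_hom (q.naturality θ) x

open scoped Classical in
/-- Extract a fiber element from a one-simplex of `N Γ`. -/
noncomputable def toFiber (f : Map Γ K) (hs : f.Surj) (σ : Set W) (hσ : σ ∈ K.faces)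
    (y : (NC Γ).obj (Opposite.op (SimplexCategory.mk 1))) : f.fiber σ :=
  if hc : tot y.1 ∈ Γ.faces ∧ f.toFun '' tot y.1 = σ then ⟨tot y.1, hc⟩
  else Classical.choice (by
    obtain ⟨γ, h1, h2⟩ := hs σ hσ
    exact ⟨⟨γ, h1, h2⟩⟩)

lemma toFiber_pos (f : Map Γ K) (hs : f.Surj) (σ : Set W) (hσ : σ ∈ K.faces)
    (y : (NC Γ).obj (Opposite.op (SimplexCategory.mk 1)))
    (hc : tot y.1 ∈ Γ.faces ∧ f.toFun '' tot y.1 = σ) :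
    toFiber f hs σ hσ y = ⟨tot y.1, hc⟩ := dif_pos hc

/-- The empirical model underlying a simplicial distribution. -/
noncomputable def Pdist (f : Map Γ K) (hs : f.Surj) (q : NC K ⟶ NC Γ ⋙ DistF R)
    (σ : Set W) (hσ : σ ∈ K.faces) : Dist R (f.fiber σ) :=
  Dist.map (toFiber f hs σ hσ) (q.app (Opposite.op (SimplexCategory.mk 1)) (oneNC σ hσ))

lemma q_eq_lift (f : Map Γ K) (hf : f.IsBundle)
    (hR : ∀ a b : R, a + b = 0 → a = 0 ∧ b = 0) {q : NC K ⟶ NC Γ ⋙ DistF R}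
    (hq : q ≫ CategoryTheory.Functor.whiskerRight (NMap f) (DistF R) = diracN R (NC K))
    {Δ : SimplexCategoryᵒᵖ} (x : (NC K).obj Δ) (h : tot x.1 ∈ K.faces) :
    q.app Δ x = Dist.map (liftNC f x) (Pdist f hf.1 q (tot x.1) h) := by
  have hnat := q_natural q (thetaTot Δ) x
  rw [map_thetaTot_oneNC x h] at hnat
  rw [Pdist, hnat, Dist.map_map]
  refine Eq.trans ?_ (Dist.map_map _ _ _).symm
  symm
  refine Dist.map_id' _ _ fun y hy => ?_
  have hyx : (NMap f).app Δ y = x := by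
    by_contra hne
    exact (Finsupp.mem_support_iff.mp hy) (supp_cond hR f hq Δ x hne)
  have him : f.toFun '' tot y.1 = tot x.1 := by rw [← tot_NMap f y, hyx]
  have hface : tot y.1 ∈ Γ.faces := by
    rcases y.2 with h0 | hfc
    · exfalso
      rw [h0, Set.image_empty] at him
      rw [← him] at h
      exact empty_not_face K h
    · exact hfc
  have hcond : tot ((NC Γ).map (thetaTot Δ) y).1 ∈ Γ.faces
      ∧ f.toFun '' tot ((NC Γ).map (thetaTot Δ) y).1 = tot x.1 := by
    rw [show tot ((NC Γ).map (thetaTot Δ) y).1 = tot y.1 from tot_map_thetaTot y.1]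
    exact ⟨hface, him⟩
  show liftNC f x (toFiber f hf.1 (tot x.1) h ((NC Γ).map (thetaTot Δ) y)) = y
  rw [toFiber_pos f hf.1 (tot x.1) h ((NC Γ).map (thetaTot Δ) y) hcond]
  refine Subtype.ext ?_
  show liftFun f (tot ((B V).map (thetaTot Δ) y.1)) x.1 = y.1
  rw [tot_map_thetaTot y.1, ← lift_unique f hf.2.2 x y hyx]

lemma q_eq_empty (f : Map Γ K) (hd : f.DiscV)
    (hR : ∀ a b : R, a + b = 0 → a = 0 ∧ b = 0) {q : NC K ⟶ NC Γ ⋙ DistF R}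
    (hq : q ≫ CategoryTheory.Functor.whiskerRight (NMap f) (DistF R) = diracN R (NC K))
    {Δ : SimplexCategoryᵒᵖ} (x : (NC K).obj Δ) (hx : tot x.1 = ∅) :
    q.app Δ x = Dist.pure (emptyNC f x) := by
  refine eq_pure_of_support _ _ fun y hy => ?_
  refine supp_cond hR f hq Δ x (fun he => hy ?_)
  have him : f.toFun '' tot y.1 = tot x.1 := by rw [← tot_NMap f y, he]
  have h0 : tot y.1 = ∅ := by
    rw [hx] at him
    exact Set.image_eq_empty.mp him
  refine Subtype.ext ?_
  show y.1 = liftFun f (∅ : Set V) x.1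
  rw [lift_unique f hd x y he, h0]

lemma P_compat (f : Map Γ K) (hf : f.IsBundle)
    (hR : ∀ a b : R, a + b = 0 → a = 0 ∧ b = 0) {q : NC K ⟶ NC Γ ⋙ DistF R}
    (hq : q ≫ CategoryTheory.Functor.whiskerRight (NMap f) (DistF R) = diracN R (NC K))
    (σ : Set W) (hσ : σ ∈ K.faces) (σ' : Set W) (hσ' : σ' ∈ K.faces) (hsub : σ' ⊆ σ) :
    Dist.map (f.resFiber hσ' hsub) (Pdist f hf.1 q σ hσ) = Pdist f hf.1 q σ' hσ' := by
  have hz : tot (twoNC σ' σ hsub hσ : (NC K).obj _).1 ∈ K.faces := by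
    rw [tot_twoNC]; exact hσ
  have hsub' : σ' ⊆ tot (twoNC σ' σ hsub hσ : (NC K).obj _).1 := by
    rw [tot_twoNC]; exact hsub
  have hb : q.app _ (oneNC σ hσ) = Dist.map ((NC Γ).map (Quiver.Hom.op phiB))
      (q.app _ (twoNC σ' σ hsub hσ)) := by
    rw [← map_phiB_twoNC σ' σ hsub hσ]
    exact q_natural q _ _
  have ha : q.app _ (oneNC σ' hσ') = Dist.map ((NC Γ).map (Quiver.Hom.op phiA))
      (q.app _ (twoNC σ' σ hsub hσ)) := by
    rw [← map_phiA_twoNC σ' σ hsub hσ hσ']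
    exact q_natural q _ _
  have hzq := q_eq_lift f hf hR hq (twoNC σ' σ hsub hσ) hz
  rw [show Pdist f hf.1 q σ hσ = Dist.map (toFiber f hf.1 σ hσ) (q.app _ (oneNC σ hσ)) from rfl,
    show Pdist f hf.1 q σ' hσ' = Dist.map (toFiber f hf.1 σ' hσ') (q.app _ (oneNC σ' hσ'))
      from rfl, hb, ha, hzq, Dist.map_map, Dist.map_map, Dist.map_map, Dist.map_map,
    Dist.map_map]
  refine congrArg (fun g => Dist.map g _) (funext fun γ => ?_)
  simp only [Function.comp_apply]
  have htB : tot ((NC Γ).map (Quiver.Hom.op phiB) (liftNC f (twoNC σ' σ hsub hσ) γ)).1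
      = γ.1 := by
    show tot ((B V).map (Quiver.Hom.op phiB) (liftNC f (twoNC σ' σ hsub hσ) γ).1) = γ.1
    rw [tot_map_phiB, tot_liftNC]
  have hcondB : tot ((NC Γ).map (Quiver.Hom.op phiB) (liftNC f (twoNC σ' σ hsub hσ) γ)).1
        ∈ Γ.faces
      ∧ f.toFun '' tot ((NC Γ).map (Quiver.Hom.op phiB)
          (liftNC f (twoNC σ' σ hsub hσ) γ)).1 = σ := by
    rw [htB]
    exact ⟨γ.2.1, by rw [γ.2.2, tot_twoNC]⟩
  have htA : tot ((NC Γ).map (Quiver.Hom.op phiA) (liftNC f (twoNC σ' σ hsub hσ) γ)).1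
      = {v ∈ γ.1 | f.toFun v ∈ σ'} := by
    show tot ((B V).map (Quiver.Hom.op phiA)
      (liftFun f γ.1 (twoNC σ' σ hsub hσ).1)) = _
    refine (tot_map_phiA _).trans ?_
    show {v ∈ γ.1 | f.toFun v ∈ stepSet (twoC σ' σ) (0 : Fin 3).val (1 : Fin 3).val} = _
    rw [Fin.val_zero, Fin.val_one, stepSet_twoC_01]
  have hcondA : tot ((NC Γ).map (Quiver.Hom.op phiA) (liftNC f (twoNC σ' σ hsub hσ) γ)).1
        ∈ Γ.faces
      ∧ f.toFun '' tot ((NC Γ).map (Quiver.Hom.op phiA)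
          (liftNC f (twoNC σ' σ hsub hσ) γ)).1 = σ' := by
    rw [htA]
    exact ⟨(f.resFiber hσ' hsub' γ).2.1, (f.resFiber hσ' hsub' γ).2.2⟩
  rw [toFiber_pos f hf.1 σ hσ _ hcondB, toFiber_pos f hf.1 σ' hσ' _ hcondA]
  refine Subtype.ext ?_
  rw [resFiber_val]
  show {v ∈ tot ((NC Γ).map (Quiver.Hom.op phiB) (liftNC f (twoNC σ' σ hsub hσ) γ)).1 |
    f.toFun v ∈ σ'} = _
  rw [htB]
  exact htA.symm

lemma EmpiricalModel.dist_congr (f : Map Γ K) (p : EmpiricalModel R f) {σ τ : Set W}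
    (e : σ = τ) (hσ : σ ∈ K.faces) (hτ : τ ∈ K.faces) {γ : f.fiber σ} {γ' : f.fiber τ}
    (eγ : γ.1 = γ'.1) : (p.dist σ hσ).1 γ = (p.dist τ hτ).1 γ' := by
  subst e
  cases Subtype.ext eγ
  rfl

end QSide

end Ctx

namespace Ctx
open CategoryTheory SComplex

/-- the assignment `ζ_f : p ↦ N p` is a bijection from the set
of empirical models on a bundle scenario `f` onto the set of simplicial
distributions on `N f`. -/
theorem statement_16 {V W : Type u} {Γ : SComplex V} {K : SComplex W}
    (f : Map Γ K) (hf : f.IsBundle) (R : Type u) [CommSemiring R]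
    (hR : ∀ a b : R, a + b = 0 → a = 0 ∧ b = 0) :
    ∃ ζ : EmpiricalModel R f → SDist R (NMap f),
      (∀ p, NpSpec f R p (ζ p).1) ∧ Function.Bijective ζ := by
  refine ⟨fun p => (⟨zeta f R p, zeta_dirac f R p⟩ : SDist R (NMap f)),
    fun p => zeta_spec f hf.2.2 R p, ?_, ?_⟩
  · -- injective
    intro p p' he
    have hz : zeta f R p = zeta f R p' := congrArg Subtype.val he
    have hdist : p.dist = p'.dist := by
      funext σ hσ
      refine Subtype.ext (Finsupp.ext fun γ => ?_)
      have hu : tot (oneNC σ hσ : (NC K).obj _).1 ∈ K.faces := by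
        rw [tot_oneNC]; exact hσ
      have e : σ = tot (oneNC σ hσ : (NC K).obj _).1 := (tot_oneNC σ hσ).symm
      have hγm : γ.1 ∈ Γ.faces ∧ f.toFun '' γ.1 = tot (oneNC σ hσ : (NC K).obj _).1 :=
        ⟨γ.2.1, by rw [tot_oneNC]; exact γ.2.2⟩
      have h1 := (zeta_spec f hf.2.2 R p).1 _ (oneNC σ hσ) (liftNC f _ ⟨γ.1, hγm⟩)
        (NMap_liftNC f _ ⟨γ.1, hγm⟩) hu ⟨γ.1, hγm⟩ (tot_liftNC f _ ⟨γ.1, hγm⟩).symm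
      have h2 := (zeta_spec f hf.2.2 R p').1 _ (oneNC σ hσ) (liftNC f _ ⟨γ.1, hγm⟩)
        (NMap_liftNC f _ ⟨γ.1, hγm⟩) hu ⟨γ.1, hγm⟩ (tot_liftNC f _ ⟨γ.1, hγm⟩).symm
      calc (p.dist σ hσ).1 γ
          = (p.dist _ hu).1 ⟨γ.1, hγm⟩ := EmpiricalModel.dist_congr f p e hσ hu rfl
        _ = ((zeta f R p).app _ (oneNC σ hσ)).1 (liftNC f _ ⟨γ.1, hγm⟩) := h1.symm
        _ = ((zeta f R p').app _ (oneNC σ hσ)).1 (liftNC f _ ⟨γ.1, hγm⟩) := by rw [hz]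
        _ = (p'.dist _ hu).1 ⟨γ.1, hγm⟩ := h2
        _ = (p'.dist σ hσ).1 γ := (EmpiricalModel.dist_congr f p' e hσ hu rfl).symm
    cases p with
    | mk d c =>
      cases p' with
      | mk d' c' =>
        cases hdist
        rfl
  · -- surjective
    intro d
    obtain ⟨q, hq⟩ := d
    refine ⟨⟨fun σ hσ => Pdist f hf.1 q σ hσ,
      fun σ hσ σ' hσ' hsub => P_compat f hf hR hq σ hσ σ' hσ' hsub⟩, ?_⟩
    refine Subtype.ext ?_
    show zeta f R _ = q
    refine NatTrans.ext (funext fun Δ => ConcreteCategory.hom_ext _ _ fun x => ?_)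
    by_cases h : tot x.1 ∈ K.faces
    · rw [zeta_app_face f R _ x h]
      exact (q_eq_lift f hf hR hq x h).symm
    · rw [zeta_app_empty f R _ x h]
      exact (q_eq_empty f hf.2.2 hR hq x (x.2.resolve_right h)).symm

end Ctx
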